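/- Let c > 0 and let U be a random variable with U > 0 a.s. and E[|log U|] < ∞. Then lim_{λ → 0⁺} (1/(-log λ)) ∫_0^∞ E[exp(-λ e^{c x} U)] dx = 1/c. -/

import Mathlib

open MeasureTheory Real Filter Set

lemma I_integrable {c a : ℝ} (hc : 0 < c) (ha : 0 < a) :
    IntegrableOn (fun x => Real.exp (-(a * Real.exp (c*x)))) (Ioi (0:ℝ)) := by
  have hmeas : AEStronglyMeasurable (fun x => Real.exp (-(a * Real.exp (c*x))))
      (volume.restrict (Ioi (0:ℝ))) := (by fun_prop : Measurable _).aestronglyMeasurable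
  refine Integrable.mono' ((exp_neg_integrableOn_Ioi 0 (mul_pos ha hc)).const_mul (Real.exp (-a)))
    hmeas (ae_restrict_of_forall_mem measurableSet_Ioi fun x hx => ?_)
  rw [Real.norm_eq_abs, abs_of_pos (Real.exp_pos _), ← Real.exp_add]
  apply Real.exp_le_exp.2
  have h1 : 1 + c * x ≤ Real.exp (c * x) := Real.add_one_le_exp _ |>.trans_eq' (by ring_nf)
  nlinarith [Real.exp_pos (c*x), (show (0:ℝ) < x from hx).le, mul_le_mul_of_nonneg_left h1 ha.le]

lemma tail_integral {c x0 : ℝ} (hc : 0 < c) :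
    ∫ x in Ioi x0, Real.exp (-(1 + c*(x - x0))) = Real.exp (-1) / c := by
  have : ∀ x : ℝ, Real.exp (-(1 + c*(x - x0))) = Real.exp (-1 + c*x0) * Real.exp (-(c*x)) := by
    intro x; rw [← Real.exp_add]; ring_nf
  simp_rw [this]
  rw [integral_const_mul]
  have := integral_comp_mul_left_Ioi (fun y => Real.exp (-y)) x0 hc
  simp only [smul_eq_mul] at this
  rw [this, integral_exp_neg_Ioi, show rexp (-1 + c * x0) * (c⁻¹ * rexp (-(c * x0))) = (rexp (-1 + c*x0) * rexp (-(c*x0))) * c⁻¹ by ring, ← Real.exp_add, show -1 + c*x0 + -(c*x0) = -1 by ring, div_eq_mul_inv]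

lemma I_upper {c a : ℝ} (hc : 0 < c) (ha : 0 < a) :
    ∫ x in Ioi (0:ℝ), Real.exp (-(a * Real.exp (c*x))) ≤ max 0 (-Real.log a) / c + 1/c := by
  set x0 := max 0 (-Real.log a) / c with hx0def
  have hx0 : 0 ≤ x0 := div_nonneg (le_max_left _ _) hc.le
  have hcx0 : -Real.log a ≤ c * x0 := by
    rw [hx0def, mul_div_cancel₀ _ hc.ne']; exact le_max_right _ _
  have hint := I_integrable hc ha (c := c)
  rw [← Ioc_union_Ioi_eq_Ioi hx0, setIntegral_union (Ioc_disjoint_Ioi le_rfl)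
    measurableSet_Ioi (hint.mono_set Ioc_subset_Ioi_self) (hint.mono_set (Ioi_subset_Ioi hx0))]
  have h1 : ∫ x in Ioc (0:ℝ) x0, Real.exp (-(a * Real.exp (c*x))) ≤ x0 := by
    calc ∫ x in Ioc (0:ℝ) x0, Real.exp (-(a * Real.exp (c*x)))
        ≤ ∫ _x in Ioc (0:ℝ) x0, (1:ℝ) := by
          apply setIntegral_mono_on (hint.mono_set Ioc_subset_Ioi_self)
            (integrableOn_const (by simp [Real.volume_Ioc])) measurableSet_Ioc
          intro x _
          rw [Real.exp_le_one_iff, neg_nonpos]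
          positivity
      _ = x0 := by simp [Real.volume_Ioc, ENNReal.toReal_ofReal hx0, hx0]
  have h2 : ∫ x in Ioi x0, Real.exp (-(a * Real.exp (c*x))) ≤ Real.exp (-1) / c := by
    rw [← tail_integral hc (x0 := x0)]
    apply setIntegral_mono_on (hint.mono_set (Ioi_subset_Ioi hx0))
      (((exp_neg_integrableOn_Ioi x0 hc).const_mul (Real.exp (-1+c*x0))).congr
        (Filter.Eventually.of_forall fun x => by show rexp (-1 + c * x0) * rexp (-c * x) = _; rw [← Real.exp_add]; ring_nf)) measurableSet_Ioi
    intro x hx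
    apply Real.exp_le_exp.2
    rw [neg_le_neg_iff]
    have hae : a * Real.exp (c*x) = Real.exp (c*x + Real.log a) := by
      rw [Real.exp_add, Real.exp_log ha]; ring
    rw [hae]
    calc 1 + c*(x-x0) ≤ Real.exp (c*(x-x0)) := by
          have := Real.add_one_le_exp (c*(x-x0)); linarith
      _ ≤ Real.exp (c*x + Real.log a) := by
          apply Real.exp_le_exp.2; nlinarith [hcx0]
  have h3 : Real.exp (-1) / c ≤ 1 / c :=
    by gcongr; exact Real.exp_le_one_iff.2 (by norm_num)
  linarith

lemma I_lower {c a : ℝ} (hc : 0 < c) (ha : 0 < a) :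
    max 0 (-Real.log a) / c - 1/c ≤ ∫ x in Ioi (0:ℝ), Real.exp (-(a * Real.exp (c*x))) := by
  have hint := I_integrable hc ha (c := c)
  have hnn : 0 ≤ ∫ x in Ioi (0:ℝ), Real.exp (-(a * Real.exp (c*x))) :=
    setIntegral_nonneg measurableSet_Ioi fun x _ => (Real.exp_pos _).le
  rcases le_or_gt 1 a with h1a | h1a
  · have : max 0 (-Real.log a) = 0 := max_eq_left (by simpa using Real.log_nonneg h1a)
    rw [this, zero_div]
    have : (1:ℝ)/c ≥ 0 := by positivity
    linarith
  · set x0 := -Real.log a / c with hx0def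
    have hla : 0 < -Real.log a := by simpa using Real.log_neg ha h1a
    have hx0 : 0 < x0 := div_pos hla hc
    have hmax : max 0 (-Real.log a) = -Real.log a := max_eq_right hla.le
    have hcx0 : c * x0 = -Real.log a := by rw [hx0def]; field_simp
    have step1 : ∫ x in Ioc (0:ℝ) x0, Real.exp (-(a * Real.exp (c*x)))
        ≤ ∫ x in Ioi (0:ℝ), Real.exp (-(a * Real.exp (c*x))) := by
      apply setIntegral_mono_set hint
        (Filter.Eventually.of_forall fun x => (Real.exp_pos _).le)
        (HasSubset.Subset.eventuallyLE Ioc_subset_Ioi_self)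
    have hcont : Continuous fun x : ℝ => 1 - a * Real.exp (c*x) := by continuity
    have step2 : ∫ x in Ioc (0:ℝ) x0, (1 - a * Real.exp (c*x))
        ≤ ∫ x in Ioc (0:ℝ) x0, Real.exp (-(a * Real.exp (c*x))) := by
      apply setIntegral_mono_on (hcont.integrableOn_Ioc)
        (hint.mono_set Ioc_subset_Ioi_self) measurableSet_Ioc
      intro x _
      have := Real.add_one_le_exp (-(a * Real.exp (c*x)))
      linarith
    have step3 : ∫ x in Ioc (0:ℝ) x0, (1 - a * Real.exp (c*x))
        = x0 - a * ((Real.exp (c*x0) - 1)/c) := by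
      rw [← intervalIntegral.integral_of_le hx0.le]
      rw [intervalIntegral.integral_sub intervalIntegrable_const
        ((show Continuous fun x : ℝ => a * Real.exp (c*x) by fun_prop).intervalIntegrable _ _)]
      have : ∫ x in (0:ℝ)..x0, a * Real.exp (c*x) = a * ((Real.exp (c*x0) - 1)/c) := by
        rw [intervalIntegral.integral_const_mul]
        have := intervalIntegral.integral_comp_mul_left (fun y => Real.exp y) (c := c) hc.ne' (a := 0) (b := x0)
        simp only [smul_eq_mul, mul_zero] at this
        rw [this, integral_exp]
        rw [Real.exp_zero]
        ring
      rw [this]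
      simp
    have hax0 : a * Real.exp (c * x0) = 1 := by
      rw [hcx0, Real.exp_neg, Real.exp_log ha]
      field_simp
    have key : x0 - 1/c ≤ x0 - a * ((Real.exp (c*x0) - 1)/c) := by
      have heq : a * ((Real.exp (c*x0) - 1)/c) = (1 - a)/c := by
        rw [mul_div_assoc', mul_sub, hax0, mul_one]
      rw [heq, sub_le_sub_iff_left]
      gcongr
      linarith
    rw [hmax]
    have : x0 = -Real.log a / c := hx0def
    linarith [step1, step2, step3, key]

lemma key_est {Ω : Type*} [MeasurableSpace Ω] (μ : Measure Ω) [IsProbabilityMeasure μ]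
    {c : ℝ} (hc : 0 < c) {U : Ω → ℝ} (hU : Measurable U) (hUpos : ∀ᵐ ω ∂μ, 0 < U ω)
    (hlog : Integrable (fun ω => |Real.log (U ω)|) μ) {l : ℝ} (hl : 0 < l) (hl1 : l < 1) :
    |(∫ x in Ioi (0:ℝ), ∫ ω, Real.exp (-(l * Real.exp (c * x) * U ω)) ∂μ) - (-Real.log l)/c|
      ≤ (1 + ∫ ω, |Real.log (U ω)| ∂μ)/c := by
  have hm : Measurable fun p : ℝ × Ω => Real.exp (-(l * Real.exp (c * p.1) * U p.2)) := by
    apply Real.measurable_exp.comp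
    exact ((((measurable_const.mul (Real.measurable_exp.comp
      (measurable_const.mul measurable_fst))).mul (hU.comp measurable_snd))).neg)
  have hrw : ∀ (u : ℝ), (fun x => Real.exp (-(l * Real.exp (c * x) * u)))
      = fun x => Real.exp (-((l * u) * Real.exp (c * x))) := by
    intro u; funext x; congr 1; ring
  have hsect : ∀ᵐ ω ∂μ, IntegrableOn
      (fun x => Real.exp (-(l * Real.exp (c * x) * U ω))) (Ioi (0:ℝ)) := by
    filter_upwards [hUpos] with ω hω
    rw [hrw (U ω)]
    exact I_integrable hc (mul_pos hl hω)
  have hlogl : 0 ≤ -Real.log l := by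
    simpa using (Real.log_neg hl hl1).le
  -- pointwise estimate on the inner x-integral
  have hIbound : ∀ᵐ ω ∂μ,
      |(∫ x in Ioi (0:ℝ), Real.exp (-(l * Real.exp (c * x) * U ω))) - (-Real.log l)/c|
        ≤ (1 + |Real.log (U ω)|)/c := by
    filter_upwards [hUpos] with ω hω
    rw [hrw (U ω)]
    have ha : 0 < l * U ω := mul_pos hl hω
    have hup := I_upper hc ha
    have hlo := I_lower hc ha
    have hmax : |max 0 (-Real.log (l * U ω)) - (-Real.log l)| ≤ |Real.log (U ω)| := by
      rw [Real.log_mul hl.ne' hω.ne']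
      rcases le_total 0 (-(Real.log l + Real.log (U ω))) with h | h
      · rw [max_eq_right h, abs_le]
        constructor <;> linarith [neg_abs_le (Real.log (U ω)), le_abs_self (Real.log (U ω))]
      · rw [max_eq_left h, abs_le]
        constructor <;> linarith [neg_abs_le (Real.log (U ω)), le_abs_self (Real.log (U ω))]
    calc |(∫ x in Ioi (0:ℝ), Real.exp (-((l * U ω) * Real.exp (c * x)))) - (-Real.log l)/c|
        ≤ |(∫ x in Ioi (0:ℝ), Real.exp (-((l * U ω) * Real.exp (c * x))))
            - max 0 (-Real.log (l * U ω))/c|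
          + |max 0 (-Real.log (l * U ω))/c - (-Real.log l)/c| := abs_sub_le _ _ _
      _ ≤ 1/c + |Real.log (U ω)|/c := by
          gcongr
          · rw [abs_le]; constructor <;> linarith
          · rw [div_sub_div_same, abs_div, abs_of_pos hc]
            gcongr
      _ = (1 + |Real.log (U ω)|)/c := by ring
  -- product integrability
  set ν := volume.restrict (Ioi (0:ℝ)) with hν
  have hprod : Integrable (fun p : ℝ × Ω => Real.exp (-(l * Real.exp (c * p.1) * U p.2)))
      (ν.prod μ) := by
    rw [integrable_prod_iff' hm.stronglyMeasurable.aestronglyMeasurable]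
    constructor
    · exact hsect
    · have hms : AEStronglyMeasurable
          (fun ω => ∫ x, ‖Real.exp (-(l * Real.exp (c * x) * U ω))‖ ∂ν) μ :=
        (hm.stronglyMeasurable.norm.integral_prod_left').aestronglyMeasurable
      apply Integrable.mono' (g := fun ω => (|Real.log l| + |Real.log (U ω)|)/c + 1/c)
        (((integrable_const _).add hlog).div_const c |>.add (integrable_const _)) hms
      filter_upwards [hUpos, hsect] with ω hω hint
      have hnorm : (fun x => ‖Real.exp (-(l * Real.exp (c * x) * U ω))‖)
          = fun x => Real.exp (-((l * U ω) * Real.exp (c * x))) := by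
        funext x
        rw [Real.norm_eq_abs, abs_of_pos (Real.exp_pos _)]
        congr 1; ring
      rw [hnorm]
      have h0 : 0 ≤ ∫ x in Ioi (0:ℝ), Real.exp (-((l * U ω) * Real.exp (c * x))) :=
        setIntegral_nonneg measurableSet_Ioi fun x _ => (Real.exp_pos _).le
      rw [Real.norm_eq_abs, abs_of_nonneg h0]
      have hup := I_upper hc (mul_pos hl hω)
      have hmle : max 0 (-Real.log (l * U ω)) ≤ |Real.log l| + |Real.log (U ω)| := by
        rw [Real.log_mul hl.ne' hω.ne']
        apply max_le (by positivity)
        calc -(Real.log l + Real.log (U ω)) ≤ |Real.log l + Real.log (U ω)| := neg_le_abs _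
          _ ≤ |Real.log l| + |Real.log (U ω)| := abs_add_le _ _
      refine hup.trans ?_
      gcongr
  -- Fubini
  have hswap := integral_integral_swap
    (f := fun x ω => Real.exp (-(l * Real.exp (c * x) * U ω))) hprod
  rw [hswap]
  have hFint : Integrable
      (fun ω => ∫ x in Ioi (0:ℝ), Real.exp (-(l * Real.exp (c * x) * U ω))) μ :=
    hprod.integral_prod_right
  have hRint : Integrable (fun ω => (1 + |Real.log (U ω)|)/c) μ :=
    ((integrable_const _).add hlog).div_const c
  have hsub : (∫ ω, (∫ x in Ioi (0:ℝ), Real.exp (-(l * Real.exp (c * x) * U ω))) ∂μ)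
      - (-Real.log l)/c
      = ∫ ω, ((∫ x in Ioi (0:ℝ), Real.exp (-(l * Real.exp (c * x) * U ω)))
          - (-Real.log l)/c) ∂μ := by
    rw [integral_sub hFint (integrable_const _), integral_const]
    simp
  rw [hsub]
  calc |∫ ω, ((∫ x in Ioi (0:ℝ), Real.exp (-(l * Real.exp (c * x) * U ω)))
          - (-Real.log l)/c) ∂μ|
      ≤ ∫ ω, |(∫ x in Ioi (0:ℝ), Real.exp (-(l * Real.exp (c * x) * U ω)))
          - (-Real.log l)/c| ∂μ := by
        simpa [Real.norm_eq_abs] using norm_integral_le_integral_norm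
          (fun ω => (∫ x in Ioi (0:ℝ), Real.exp (-(l * Real.exp (c * x) * U ω)))
            - (-Real.log l)/c) (μ := μ)
    _ ≤ ∫ ω, (1 + |Real.log (U ω)|)/c ∂μ :=
        integral_mono_ae (hFint.sub (integrable_const _)).abs hRint hIbound
    _ = (1 + ∫ ω, |Real.log (U ω)| ∂μ)/c := by
        rw [integral_div, integral_add (integrable_const _) hlog, integral_const]
        simp

theorem stmt12 {Ω : Type*} [MeasurableSpace Ω] (μ : Measure Ω) [IsProbabilityMeasure μ]
    (c : ℝ) (hc : 0 < c)
    (U : Ω → ℝ) (hU : Measurable U) (hUpos : ∀ᵐ ω ∂μ, 0 < U ω)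
    (hlog : Integrable (fun ω => |Real.log (U ω)|) μ) :
    Tendsto (fun l : ℝ =>
        (1 / (-Real.log l)) * ∫ x in Ioi (0:ℝ), ∫ ω, Real.exp (-(l * Real.exp (c * x) * U ω)) ∂μ)
      (nhdsWithin 0 (Ioi 0)) (nhds (1/c)) := by
  set M := ∫ ω, |Real.log (U ω)| ∂μ with hM
  set B := (1 + M)/c with hB
  set F := fun l : ℝ => ∫ x in Ioi (0:ℝ), ∫ ω, Real.exp (-(l * Real.exp (c * x) * U ω)) ∂μ
    with hF
  have hmem : Ioo (0:ℝ) (Real.exp (-1)) ∈ nhdsWithin (0:ℝ) (Ioi 0) :=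
    Ioo_mem_nhdsGT_of_mem ⟨le_refl 0, Real.exp_pos _⟩
  have hbnd : ∀ᶠ l in nhdsWithin (0:ℝ) (Ioi 0),
      ‖(1 / (-Real.log l)) * F l - 1/c‖ ≤ B * (1/(-Real.log l)) := by
    filter_upwards [hmem] with l hl
    have hl0 : 0 < l := hl.1
    have hl1 : l < 1 := hl.2.trans_le (Real.exp_le_one_iff.2 (by norm_num))
    have hlog1 : 1 ≤ -Real.log l := by
      have := Real.log_le_log hl0 hl.2.le
      rw [Real.log_exp] at this
      linarith
    have hlogpos : 0 < -Real.log l := by linarith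
    have hkey := key_est μ hc hU hUpos hlog hl0 hl1
    have heq : (1 / (-Real.log l)) * F l - 1/c
        = (F l - (-Real.log l)/c) * (1/(-Real.log l)) := by
      have hne : Real.log l ≠ 0 := by linarith
      field_simp
      ring
    rw [heq, norm_mul, Real.norm_eq_abs, Real.norm_eq_abs,
      abs_of_pos (by positivity : (0:ℝ) < 1/(-Real.log l))]
    gcongr

  have htop : Tendsto (fun l : ℝ => -Real.log l) (nhdsWithin (0:ℝ) (Ioi 0)) atTop :=
    tendsto_neg_atBot_atTop.comp Real.tendsto_log_nhdsGT_zero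
  have h0 : Tendsto (fun l : ℝ => B * (1/(-Real.log l))) (nhdsWithin (0:ℝ) (Ioi 0)) (nhds 0) := by
    have := (htop.inv_tendsto_atTop).const_mul B
    simpa [one_div] using this
  have hz := squeeze_zero_norm' hbnd h0
  have := hz.add_const (1/c)
  simpa using this
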